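/- Let H be a symmetric positive definite n×n real matrix, X an n×p real matrix of rank p, and L₁ (n×p) and L₂ (n×(n−p)) real matrices such that [L₁ L₂] is nonsingular, L₁ᵀX = I_p, and L₂ᵀX = 0. Then (XᵀH⁻¹X)⁻¹ = L₁ᵀHL₁ − L₁ᵀHL₂(L₂ᵀHL₂)⁻¹L₂ᵀHL₁. -/

import Mathlib

open Matrix

lemma posDef_transpose_mul_mul {n m : ℕ} {H : Matrix (Fin n) (Fin n) ℝ}
    (hH : H.PosDef) (B : Matrix (Fin n) (Fin m) ℝ)
    (hB : ∀ v : Fin m → ℝ, B *ᵥ v = 0 → v = 0) : (Bᵀ * H * B).PosDef := by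
  refine Matrix.PosDef.of_dotProduct_mulVec_pos ?_ ?_
  · have h := isHermitian_conjTranspose_mul_mul B hH.1
    rwa [conjTranspose_eq_transpose_of_trivial] at h
  · intro x hx
    have hBx : B *ᵥ x ≠ 0 := fun h => hx (hB x h)
    have := hH.dotProduct_mulVec_pos hBx
    calc (0:ℝ) < star (B *ᵥ x) ⬝ᵥ (H *ᵥ (B *ᵥ x)) := this
    _ = star x ⬝ᵥ ((Bᵀ * H * B) *ᵥ x) := by
        simp only [star_trivial, ← mulVec_mulVec]
        rw [dotProduct_mulVec x, vecMul_transpose, dotProduct_mulVec]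

theorem stmt_16 {n p : ℕ} (H : Matrix (Fin n) (Fin n) ℝ)
    (X : Matrix (Fin n) (Fin p) ℝ)
    (L₁ : Matrix (Fin n) (Fin p) ℝ) (L₂ : Matrix (Fin n) (Fin (n - p)) ℝ)
    (hH : H.PosDef) (hX : X.rank = p)
    (hL : ∃ M : Matrix (Fin p ⊕ Fin (n - p)) (Fin n) ℝ,
      Matrix.fromCols L₁ L₂ * M = 1 ∧ M * Matrix.fromCols L₁ L₂ = 1)
    (hL₁X : L₁ᵀ * X = 1) (hL₂X : L₂ᵀ * X = 0) :
    (Xᵀ * H⁻¹ * X)⁻¹ = L₁ᵀ * H * L₁ - L₁ᵀ * H * L₂ * (L₂ᵀ * H * L₂)⁻¹ * L₂ᵀ * H * L₁ := by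
  obtain ⟨M, hLM, hML⟩ := hL
  set M₁ := M.toRows₁ with hM₁
  set M₂ := M.toRows₂ with hM₂
  have hMsplit : fromRows M₁ M₂ = M := fromRows_toRows M
  have hsum : L₁ * M₁ + L₂ * M₂ = 1 := by
    rw [← fromCols_mul_fromRows, hMsplit, hLM]
  have hXL₁ : Xᵀ * L₁ = 1 := by
    have := congrArg Matrix.transpose hL₁X
    simpa [transpose_mul] using this
  have hXL₂ : Xᵀ * L₂ = 0 := by
    have := congrArg Matrix.transpose hL₂X
    simpa [transpose_mul] using this
  have hXM₁ : Xᵀ = M₁ := by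
    calc Xᵀ = Xᵀ * (L₁ * M₁ + L₂ * M₂) := by rw [hsum, Matrix.mul_one]
    _ = (Xᵀ * L₁) * M₁ + (Xᵀ * L₂) * M₂ := by
        rw [Matrix.mul_add, Matrix.mul_assoc, Matrix.mul_assoc]
    _ = M₁ := by rw [hXL₁, hXL₂, Matrix.one_mul, Matrix.zero_mul, add_zero]
  have hX' : X = M₁ᵀ := by rw [← hXM₁, transpose_transpose]
  have hM₁L₁ : M₁ * L₁ = 1 := hXM₁ ▸ hXL₁
  have hM₁L₂ : M₁ * L₂ = 0 := hXM₁ ▸ hXL₂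
  -- L₂ has injective mulVec
  have hL₂inj : ∀ v : Fin (n - p) → ℝ, L₂ *ᵥ v = 0 → v = 0 := by
    intro v hv
    have h1 : (fromCols L₁ L₂) *ᵥ (Sum.elim (0 : Fin p → ℝ) v) = 0 := by
      rw [fromCols_mulVec_sumElim, hv, Matrix.mulVec_zero, zero_add]
    have h2 : (M * fromCols L₁ L₂) *ᵥ (Sum.elim (0 : Fin p → ℝ) v)
        = Sum.elim (0 : Fin p → ℝ) v := by
      rw [hML, Matrix.one_mulVec]
    rw [← Matrix.mulVec_mulVec, h1, Matrix.mulVec_zero] at h2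
    funext i
    exact (congrFun h2 (Sum.inr i)).symm
  have hD : (L₂ᵀ * H * L₂).PosDef := posDef_transpose_mul_mul hH L₂ hL₂inj
  have hDinv : (L₂ᵀ * H * L₂)⁻¹ * (L₂ᵀ * H * L₂) = 1 :=
    Matrix.nonsing_inv_mul _ (Matrix.isUnit_iff_isUnit_det _ |>.mp hD.isUnit)
  have hHinv : H * H⁻¹ = 1 :=
    Matrix.mul_nonsing_inv _ (Matrix.isUnit_iff_isUnit_det _ |>.mp hH.isUnit)
  have key : ∀ (q : ℕ) (C : Matrix (Fin n) (Fin q) ℝ),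
      Cᵀ * H * L₁ * (M₁ * H⁻¹ * M₁ᵀ) + Cᵀ * H * L₂ * (M₂ * H⁻¹ * M₁ᵀ)
        = Cᵀ * M₁ᵀ := by
    intro q C
    calc Cᵀ * H * L₁ * (M₁ * H⁻¹ * M₁ᵀ) + Cᵀ * H * L₂ * (M₂ * H⁻¹ * M₁ᵀ)
        = Cᵀ * H * ((L₁ * M₁ + L₂ * M₂) * (H⁻¹ * M₁ᵀ)) := by
          simp only [Matrix.mul_add, Matrix.add_mul, Matrix.mul_assoc]
    _ = Cᵀ * (H * H⁻¹) * M₁ᵀ := by rw [hsum, Matrix.one_mul]; simp only [Matrix.mul_assoc]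
    _ = Cᵀ * M₁ᵀ := by rw [hHinv, Matrix.mul_one]
  have e1 : L₁ᵀ * H * L₁ * (M₁ * H⁻¹ * M₁ᵀ) + L₁ᵀ * H * L₂ * (M₂ * H⁻¹ * M₁ᵀ) = 1 := by
    rw [key p L₁]
    calc L₁ᵀ * M₁ᵀ = (M₁ * L₁)ᵀ := (transpose_mul M₁ L₁).symm
    _ = 1 := by rw [hM₁L₁, transpose_one]
  have e2 : L₂ᵀ * H * L₁ * (M₁ * H⁻¹ * M₁ᵀ) + L₂ᵀ * H * L₂ * (M₂ * H⁻¹ * M₁ᵀ) = 0 := by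
    rw [key (n - p) L₂]
    calc L₂ᵀ * M₁ᵀ = (M₁ * L₂)ᵀ := (transpose_mul M₁ L₂).symm
    _ = 0 := by rw [hM₁L₂, transpose_zero]
  have h2' : L₂ᵀ * H * L₁ * (M₁ * H⁻¹ * M₁ᵀ) = -(L₂ᵀ * H * L₂ * (M₂ * H⁻¹ * M₁ᵀ)) :=
    eq_neg_of_add_eq_zero_left e2
  have h3 : L₁ᵀ * H * L₂ * (L₂ᵀ * H * L₂)⁻¹ * L₂ᵀ * H * L₁ * (M₁ * H⁻¹ * M₁ᵀ)
      = -(L₁ᵀ * H * L₂ * (M₂ * H⁻¹ * M₁ᵀ)) := by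
    calc L₁ᵀ * H * L₂ * (L₂ᵀ * H * L₂)⁻¹ * L₂ᵀ * H * L₁ * (M₁ * H⁻¹ * M₁ᵀ)
        = L₁ᵀ * H * L₂ * ((L₂ᵀ * H * L₂)⁻¹ * (L₂ᵀ * H * L₁ * (M₁ * H⁻¹ * M₁ᵀ))) := by
          simp only [Matrix.mul_assoc]
    _ = L₁ᵀ * H * L₂ * ((L₂ᵀ * H * L₂)⁻¹ * (-(L₂ᵀ * H * L₂ * (M₂ * H⁻¹ * M₁ᵀ)))) := by
          rw [h2']
    _ = -(L₁ᵀ * H * L₂ * (((L₂ᵀ * H * L₂)⁻¹ * (L₂ᵀ * H * L₂)) * (M₂ * H⁻¹ * M₁ᵀ))) := by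
          simp only [Matrix.mul_neg, Matrix.mul_assoc]
    _ = -(L₁ᵀ * H * L₂ * (M₂ * H⁻¹ * M₁ᵀ)) := by rw [hDinv, Matrix.one_mul]
  have hleft : (L₁ᵀ * H * L₁ - L₁ᵀ * H * L₂ * (L₂ᵀ * H * L₂)⁻¹ * L₂ᵀ * H * L₁)
      * (M₁ * H⁻¹ * M₁ᵀ) = 1 := by
    rw [Matrix.sub_mul, h3, sub_neg_eq_add, e1]
  rw [hXM₁, hX']
  exact Matrix.inv_eq_left_inv hleft
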